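/- Let n be a natural number and let M be a real n×n matrix such that every complex eigenvalue of M (every root in ℂ of its characteristic polynomial) has strictly positive real part. Let u, v be linearly independent vectors in EuclideanSpace ℝ (Fin 2), let C be the real 2×2 matrix C = ![![‖u‖², -⟪u, v⟫], ![-⟪v, u⟫, ‖v‖²]], and let B be an arbitrary real 2×n matrix. Then every complex eigenvalue of the (n+2)×(n+2) block lower-triangular matrix Matrix.fromBlocks M 0 B C has strictly positive real part. -/
import Mathlib


open scoped InnerProductSpace

private lemma charpoly_fin_two' (A : Matrix (Fin 2) (Fin 2) ℂ) :
    A.charpoly = Polynomial.X ^ 2 - Polynomial.C A.trace * Polynomial.X + Polynomial.C A.det := by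
  rw [Matrix.charpoly, Matrix.det_fin_two]
  simp [Matrix.charmatrix_apply_eq, Matrix.charmatrix_apply_ne, Matrix.trace_fin_two,
    Matrix.det_fin_two]
  ring

theorem stmt_2 (n : ℕ) (M : Matrix (Fin n) (Fin n) ℝ)
    (hM : ∀ μ : ℂ, (Matrix.charpoly (M.map ((↑) : ℝ → ℂ))).IsRoot μ → 0 < μ.re)
    (u v : EuclideanSpace ℝ (Fin 2))
    (hind : LinearIndependent ℝ ![u, v])
    (C : Matrix (Fin 2) (Fin 2) ℝ)
    (hC : C = !![‖u‖ ^ 2, -⟪u, v⟫_ℝ; -⟪v, u⟫_ℝ, ‖v‖ ^ 2])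
    (B : Matrix (Fin 2) (Fin n) ℝ) :
    ∀ μ : ℂ,
      (Matrix.charpoly ((Matrix.fromBlocks M 0 B C).map ((↑) : ℝ → ℂ))).IsRoot μ →
        0 < μ.re := by
  intro μ hμ
  -- split the charpoly
  have hmap : (Matrix.fromBlocks M 0 B C).map ((↑) : ℝ → ℂ)
      = Matrix.fromBlocks (M.map ((↑) : ℝ → ℂ)) 0 (B.map ((↑) : ℝ → ℂ))
        (C.map ((↑) : ℝ → ℂ)) := by
    rw [Matrix.fromBlocks_map, Matrix.map_zero _ Complex.ofReal_zero]
  rw [hmap, Matrix.charpoly_fromBlocks_zero₁₂] at hμ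
  have hroot := hμ
  rw [Polynomial.IsRoot, Polynomial.eval_mul, mul_eq_zero] at hroot
  rcases hroot with h | h
  · exact hM μ h
  -- now μ is a root of the charpoly of C over ℂ
  have hu0 : u ≠ 0 := by
    intro h
    exact (hind.ne_zero 0 (by simp [h]))
  have hv0 : v ≠ 0 := by
    intro h
    exact (hind.ne_zero 1 (by simp [h]))
  have hpair := LinearIndependent.pair_iff.mp (by simpa using hind)
  have hau : (0:ℝ) < ‖u‖ := norm_pos_iff.mpr hu0
  have hav : (0:ℝ) < ‖v‖ := norm_pos_iff.mpr hv0
  have h1 : ⟪u, v⟫_ℝ < ‖u‖ * ‖v‖ := by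
    rw [inner_lt_norm_mul_iff_real]
    intro hcol
    have := hpair ‖v‖ (-‖u‖) (by rw [neg_smul]; rw [hcol]; abel)
    exact (ne_of_gt hav) this.1
  have h2 : -(‖u‖ * ‖v‖) < ⟪u, v⟫_ℝ := by
    have : ⟪u, -v⟫_ℝ < ‖u‖ * ‖-v‖ := by
      rw [inner_lt_norm_mul_iff_real]
      intro hcol
      rw [norm_neg] at hcol
      have := hpair ‖v‖ ‖u‖ (by rw [hcol, smul_neg]; abel)
      exact (ne_of_gt hav) this.1
    rw [inner_neg_right, norm_neg] at this
    linarith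
  set t : ℝ := ‖u‖ ^ 2 + ‖v‖ ^ 2 with ht
  set d : ℝ := ‖u‖ ^ 2 * ‖v‖ ^ 2 - ⟪u, v⟫_ℝ ^ 2 with hd
  have htpos : 0 < t := by positivity
  have hdpos : 0 < d := by nlinarith
  have htr : (C.map ((↑) : ℝ → ℂ)).trace = (t : ℂ) := by
    subst hC
    simp [Matrix.trace_fin_two, ht]
  have hdet : (C.map ((↑) : ℝ → ℂ)).det = (d : ℂ) := by
    subst hC
    simp [Matrix.det_fin_two, hd, real_inner_comm u v]
    ring
  rw [charpoly_fin_two', htr, hdet] at h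
  simp only [Polynomial.eval_add, Polynomial.eval_sub, Polynomial.eval_mul,
    Polynomial.eval_pow, Polynomial.eval_X, Polynomial.eval_C] at h
  have hre := congrArg Complex.re h
  have him := congrArg Complex.im h
  simp [Complex.add_re, Complex.sub_re, Complex.mul_re, Complex.mul_im, pow_two] at hre him
  -- hre : μ.re^2 - μ.im^2 - t*μ.re + d = 0 (in some form), him : 2 μ.re μ.im - t μ.im = 0
  rcases eq_or_ne μ.im 0 with hb | hb
  · rw [hb] at hre
    nlinarith [hre, sq_nonneg μ.re]
  · have : 2 * μ.re = t := by
      have h2ab : μ.im * (2 * μ.re - t) = 0 := by nlinarith [him]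
      rcases mul_eq_zero.mp h2ab with h' | h'
      · exact absurd h' hb
      · linarith
    linarith
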